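/- Let x_1, …, x_{d'} ∈ ℝ^{d'} with λ := λ_min(Σ_{i=1}^{d'} x_i x_iᵀ) > 0, let k ≥ 2 and q ≥ 1 be integers, let w_1, …, w_{d'} ∈ [0,1] with w_min = min_i w_i, and let Z_1, …, Z_{d'} be independent random variables with Z_i ~ Binomial(k, w_i). Set ε_k = sqrt(q·log k/(2k)) and V = I + Σ_{i=1}^{d'} Z_i·x_i x_iᵀ. If w_min ≥ ε_k, then with probability at least 1 − d'/k^q, λ_min(V) ≥ k·(w_min − ε_k)·λ. -/

import Mathlib

open MeasureTheory ProbabilityTheory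
open scoped ENNReal

section Aux

open Matrix Real

/-! ### Hoeffding's lemma (analytic core) -/

lemma hoeffding_aux (p : ℝ) (hp0 : 0 ≤ p) (hp1 : p ≤ 1) (t : ℝ) (ht : t ≤ 0) :
    1 - p + p * Real.exp t ≤ Real.exp (p * t + t ^ 2 / 8) := by
  set u : ℝ → ℝ := fun s => 1 - p + p * Real.exp s with hu_def
  have hu_pos : ∀ s, 0 < u s := by
    intro s
    rcases eq_or_lt_of_le hp1 with h | h
    · simp only [hu_def, h]
      simpa using Real.exp_pos s
    · have : 0 ≤ p * Real.exp s := mul_nonneg hp0 (Real.exp_pos s).le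
      simp only [hu_def]; linarith
  have hu : ∀ s, HasDerivAt u (p * Real.exp s) s := fun s =>
    ((Real.hasDerivAt_exp s).const_mul p).const_add (1 - p)
  set G : ℝ → ℝ := fun s => p + s / 4 - p * Real.exp s / u s with hG_def
  have hG : ∀ s, HasDerivAt G
      (1 / 4 - (p * Real.exp s * u s - p * Real.exp s * (p * Real.exp s)) / (u s) ^ 2) s := by
    intro s
    have h1 : HasDerivAt (fun s : ℝ => p + s / 4) (1 / 4) s := by
      simpa using ((hasDerivAt_id s).div_const 4).const_add p
    have h2 : HasDerivAt (fun s => p * Real.exp s / u s)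
        ((p * Real.exp s * u s - p * Real.exp s * (p * Real.exp s)) / (u s) ^ 2) s :=
      ((Real.hasDerivAt_exp s).const_mul p).div (hu s) (hu_pos s).ne'
    exact h1.sub h2
  have hG_deriv_nonneg : ∀ s, 0 ≤ deriv G s := by
    intro s
    rw [(hG s).deriv]
    have hus := hu_pos s
    have hE := Real.exp_pos s
    have h4 : (p * Real.exp s * u s - p * Real.exp s * (p * Real.exp s)) / (u s) ^ 2 ≤ 1 / 4 := by
      rw [div_le_iff₀ (by positivity)]
      have hB : 0 ≤ p * Real.exp s := mul_nonneg hp0 hE.le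
      have husq : u s = 1 - p + p * Real.exp s := rfl
      nlinarith [sq_nonneg (1 - p - p * Real.exp s)]
    linarith
  have hG_mono : Monotone G :=
    monotone_of_deriv_nonneg (fun s => (hG s).differentiableAt) hG_deriv_nonneg
  have hG0 : G 0 = 0 := by
    simp only [hG_def, hu_def]
    norm_num
  set F : ℝ → ℝ := fun s => p * s + s ^ 2 / 8 - Real.log (u s) with hF_def
  have hF : ∀ s, HasDerivAt F (G s) s := by
    intro s
    have h1 : HasDerivAt (fun s : ℝ => p * s + s ^ 2 / 8) (p + s / 4) s := by
      have : HasDerivAt (fun s : ℝ => p * s + s ^ 2 / 8) (p * 1 + ((2:ℕ):ℝ) * s ^ (2 - 1) / 8) s :=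
        ((hasDerivAt_id s).const_mul p).add ((hasDerivAt_pow 2 s).div_const 8)
      convert this using 1
      ring
    have h2 : HasDerivAt (fun s => Real.log (u s)) (p * Real.exp s / u s) s :=
      (hu s).log (hu_pos s).ne'
    exact h1.sub h2
  have hF_anti : AntitoneOn F (Set.Iic 0) := by
    apply antitoneOn_of_deriv_nonpos (convex_Iic 0)
    · exact fun s _ => ((hF s).differentiableAt).continuousAt.continuousWithinAt
    · exact fun s _ => ((hF s).differentiableAt).differentiableWithinAt
    · intro s hs
      rw [(hF s).deriv]
      have : G s ≤ G 0 := hG_mono (le_of_lt (by simpa using hs))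
      rw [hG0] at this
      exact this
  have hF0 : F 0 = 0 := by
    simp only [hF_def, hu_def]
    norm_num
  have hFt : 0 ≤ F t := by
    have := hF_anti (Set.mem_Iic.2 ht) (Set.mem_Iic.2 le_rfl) ht
    rw [hF0] at this
    exact this
  have hlog : Real.log (u t) ≤ p * t + t ^ 2 / 8 := by
    simp only [hF_def] at hFt; linarith
  calc u t ≤ Real.exp (Real.log (u t)) := by rw [Real.exp_log (hu_pos t)]
    _ ≤ _ := Real.exp_le_exp.2 hlog

/-! ### Chernoff-Hoeffding tail for the binomial distribution -/

lemma binom_chernoff (k : ℕ) (p ε : ℝ) (hp0 : 0 ≤ p) (hp1 : p ≤ 1)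
    (hε : 0 ≤ ε) :
    ∑ m ∈ Finset.range ⌈(k : ℝ) * (p - ε)⌉₊,
      (k.choose m : ℝ) * p ^ m * (1 - p) ^ (k - m) ≤ Real.exp (-(2 * (k : ℝ) * ε ^ 2)) := by
  set s : ℝ := 4 * ε with hs_def
  have hs : 0 ≤ s := by positivity
  set a : ℝ := (k : ℝ) * (p - ε) with ha_def
  have hp1' : 0 ≤ 1 - p := by linarith
  have hpm : ∀ m : ℕ, 0 ≤ (k.choose m : ℝ) * p ^ m * (1 - p) ^ (k - m) := fun m => by positivity
  have step1 : ∑ m ∈ Finset.range ⌈a⌉₊, (k.choose m : ℝ) * p ^ m * (1 - p) ^ (k - m)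
      ≤ ∑ m ∈ Finset.range ⌈a⌉₊,
        Real.exp (s * (a - m)) * ((k.choose m : ℝ) * p ^ m * (1 - p) ^ (k - m)) := by
    apply Finset.sum_le_sum
    intro m hm
    have hma : (m : ℝ) < a := Nat.lt_ceil.mp (Finset.mem_range.mp hm)
    have h1 : (1 : ℝ) ≤ Real.exp (s * (a - m)) := by
      rw [Real.one_le_exp_iff]
      exact mul_nonneg hs (by linarith)
    nlinarith [hpm m]
  have hsub : Finset.range ⌈a⌉₊ ⊆ Finset.range (k + 1) := by
    apply Finset.range_subset_range.mpr
    have : a ≤ (k : ℝ) := by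
      have : p - ε ≤ 1 := by linarith
      calc a = (k : ℝ) * (p - ε) := rfl
        _ ≤ (k : ℝ) * 1 := by
            apply mul_le_mul_of_nonneg_left this (Nat.cast_nonneg k)
        _ = (k : ℝ) := mul_one _
    calc ⌈a⌉₊ ≤ ⌈(k : ℝ)⌉₊ := Nat.ceil_le_ceil this
      _ = k := Nat.ceil_natCast k
      _ ≤ k + 1 := Nat.le_succ k
  have step2 : ∑ m ∈ Finset.range ⌈a⌉₊,
        Real.exp (s * (a - m)) * ((k.choose m : ℝ) * p ^ m * (1 - p) ^ (k - m))
      ≤ ∑ m ∈ Finset.range (k + 1),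
        Real.exp (s * (a - m)) * ((k.choose m : ℝ) * p ^ m * (1 - p) ^ (k - m)) := by
    apply Finset.sum_le_sum_of_subset_of_nonneg hsub
    intro m _ _
    exact mul_nonneg (Real.exp_pos _).le (hpm m)
  have step3 : ∑ m ∈ Finset.range (k + 1),
        Real.exp (s * (a - m)) * ((k.choose m : ℝ) * p ^ m * (1 - p) ^ (k - m))
      = Real.exp (s * a) * (p * Real.exp (-s) + (1 - p)) ^ k := by
    rw [add_pow, Finset.mul_sum]
    apply Finset.sum_congr rfl
    intro m _
    have h1 : Real.exp (s * (a - m)) = Real.exp (s * a) * Real.exp (-s) ^ m := by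
      rw [← Real.exp_nat_mul, ← Real.exp_add]
      ring_nf
    rw [h1, mul_pow]
    ring
  have step4 : (p * Real.exp (-s) + (1 - p)) ^ k
      ≤ Real.exp (p * (-s) + (-s) ^ 2 / 8) ^ k := by
    apply pow_le_pow_left₀
    · positivity
    · have := hoeffding_aux p hp0 hp1 (-s) (by linarith)
      linarith
  have step5 : Real.exp (s * a) * Real.exp (p * (-s) + (-s) ^ 2 / 8) ^ k
      = Real.exp (-(2 * (k : ℝ) * ε ^ 2)) := by
    rw [← Real.exp_nat_mul, ← Real.exp_add]
    congr 1
    simp only [ha_def, hs_def]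
    ring
  calc ∑ m ∈ Finset.range ⌈a⌉₊, (k.choose m : ℝ) * p ^ m * (1 - p) ^ (k - m)
      ≤ ∑ m ∈ Finset.range (k + 1),
        Real.exp (s * (a - m)) * ((k.choose m : ℝ) * p ^ m * (1 - p) ^ (k - m)) :=
        le_trans step1 step2
    _ = Real.exp (s * a) * (p * Real.exp (-s) + (1 - p)) ^ k := step3
    _ ≤ Real.exp (s * a) * Real.exp (p * (-s) + (-s) ^ 2 / 8) ^ k := by
        apply mul_le_mul_of_nonneg_left step4 (Real.exp_pos _).le
    _ = Real.exp (-(2 * (k : ℝ) * ε ^ 2)) := step5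

end Aux

/-- The smallest eigenvalue of a (symmetric) real matrix, defined as the infimum of its set of
(real) eigenvalues. -/
noncomputable def lambdaMin {n : Type*} [Fintype n] [DecidableEq n]
    (M : Matrix n n ℝ) : ℝ :=
  sInf {r : ℝ | ∃ v : n → ℝ, v ≠ 0 ∧ M.mulVec v = r • v}

section LinAlg
open Matrix

variable {n : Type*} [Fintype n] [DecidableEq n]

lemma eig_mem {M : Matrix n n ℝ} (hM : M.IsHermitian) {r : ℝ} {v : n → ℝ}
    (hv : v ≠ 0) (hMv : M *ᵥ v = r • v) : ∃ i, hM.eigenvalues i = r := by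
  set U : Matrix n n ℝ := (hM.eigenvectorUnitary : Matrix n n ℝ) with hU_def
  have h1 : star U * U = 1 := Unitary.coe_star_mul_self hM.eigenvectorUnitary
  have h2 : U * star U = 1 := Unitary.coe_mul_star_self hM.eigenvectorUnitary
  set c : n → ℝ := star U *ᵥ v with hc_def
  have hc : c ≠ 0 := by
    intro h
    apply hv
    have : U *ᵥ c = v := by
      rw [hc_def, Matrix.mulVec_mulVec, h2, Matrix.one_mulVec]
    rw [← this, h, Matrix.mulVec_zero]
  have hUM : star U * M = Matrix.diagonal (RCLike.ofReal ∘ hM.eigenvalues) * star U := by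
    have h3 : star U * M * U = Matrix.diagonal (RCLike.ofReal ∘ hM.eigenvalues) := by
      rw [← hM.conjStarAlgAut_star_eigenvectorUnitary, Unitary.conjStarAlgAut_star_apply]
    calc star U * M = star U * M * (U * star U) := by rw [h2, mul_one]
      _ = (star U * M * U) * star U := (mul_assoc _ _ _).symm
      _ = Matrix.diagonal (RCLike.ofReal ∘ hM.eigenvalues) * star U := by rw [h3]
  have hDc : Matrix.diagonal (RCLike.ofReal ∘ hM.eigenvalues) *ᵥ c = r • c := by
    calc Matrix.diagonal (RCLike.ofReal ∘ hM.eigenvalues) *ᵥ c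
        = (Matrix.diagonal (RCLike.ofReal ∘ hM.eigenvalues) * star U) *ᵥ v := by
          rw [hc_def, Matrix.mulVec_mulVec]
      _ = (star U * M) *ᵥ v := by rw [hUM]
      _ = star U *ᵥ (M *ᵥ v) := by rw [Matrix.mulVec_mulVec]
      _ = star U *ᵥ (r • v) := by rw [hMv]
      _ = r • c := by rw [Matrix.mulVec_smul, hc_def]
  obtain ⟨i, hi⟩ := Function.ne_iff.mp hc
  refine ⟨i, ?_⟩
  have := congrFun hDc i
  rw [Matrix.mulVec_diagonal] at this
  simp only [Function.comp_apply, Pi.smul_apply, smul_eq_mul, RCLike.ofReal_real_eq_id,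
    id_eq] at this
  exact mul_right_cancel₀ hi this

lemma exists_eigvec {M : Matrix n n ℝ} (hM : M.IsHermitian) (j : n) :
    ∃ v : n → ℝ, v ≠ 0 ∧ M.mulVec v = hM.eigenvalues j • v := by
  refine ⟨_, ?_, hM.mulVec_eigenvectorBasis j⟩
  have h0 := hM.eigenvectorBasis.orthonormal.ne_zero j
  intro h
  apply h0
  ext i
  exact congrFun h i

lemma eigset {M : Matrix n n ℝ} (hM : M.IsHermitian) :
    {r : ℝ | ∃ v : n → ℝ, v ≠ 0 ∧ M.mulVec v = r • v} = Set.range hM.eigenvalues := by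
  ext r
  constructor
  · rintro ⟨v, hv, hMv⟩
    obtain ⟨i, hi⟩ := eig_mem hM hv hMv
    exact ⟨i, hi⟩
  · rintro ⟨i, rfl⟩
    exact exists_eigvec hM i

lemma lambdaMin_le [Nonempty n] {M : Matrix n n ℝ} (hM : M.IsHermitian) (i : n) :
    lambdaMin M ≤ hM.eigenvalues i := by
  rw [lambdaMin, eigset hM]
  exact csInf_le (Set.finite_range _).bddBelow ⟨i, rfl⟩

lemma rayleigh [Nonempty n] {M : Matrix n n ℝ} (hM : M.IsHermitian) (v : n → ℝ) :
    lambdaMin M * (v ⬝ᵥ v) ≤ v ⬝ᵥ (M *ᵥ v) := by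
  set B : Matrix n n ℝ := M - lambdaMin M • 1 with hB_def
  have hB : B.IsHermitian := by
    unfold Matrix.IsHermitian
    rw [hB_def, Matrix.conjTranspose_sub, Matrix.conjTranspose_smul, hM.eq]
    congr 1
    · simp
  have hBev : ∀ j, 0 ≤ hB.eigenvalues j := by
    intro j
    obtain ⟨u, hune, hu⟩ := exists_eigvec hB j
    have hMu : M *ᵥ u = (hB.eigenvalues j + lambdaMin M) • u := by
      have hsub : B *ᵥ u = M *ᵥ u - lambdaMin M • u := by
        rw [hB_def, Matrix.sub_mulVec, Matrix.smul_mulVec, Matrix.one_mulVec]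
      rw [hsub] at hu
      rw [add_smul]
      exact sub_eq_iff_eq_add.mp hu
    obtain ⟨i, hi⟩ := eig_mem hM hune hMu
    have := lambdaMin_le hM i
    rw [hi] at this
    linarith
  have hPSD := hB.posSemidef_iff_eigenvalues_nonneg.mpr hBev
  have h := hPSD.dotProduct_mulVec_nonneg v
  rw [hB_def, Matrix.sub_mulVec, Matrix.smul_mulVec, Matrix.one_mulVec] at h
  simp only [star_trivial, dotProduct_sub, dotProduct_smul, smul_eq_mul] at h
  linarith

lemma quad_vecMulVec (a v : n → ℝ) : v ⬝ᵥ ((vecMulVec a a) *ᵥ v) = (a ⬝ᵥ v) ^ 2 := by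
  calc v ⬝ᵥ (vecMulVec a a *ᵥ v) = ∑ i, ∑ j, v i * (a i * a j * v j) := by
        simp [dotProduct, mulVec, vecMulVec_apply, Finset.mul_sum]
    _ = (∑ i, a i * v i) * (∑ j, a j * v j) := by
        rw [Finset.sum_mul_sum]
        exact Finset.sum_congr rfl fun i _ => Finset.sum_congr rfl fun j _ => by ring
    _ = (a ⬝ᵥ v) ^ 2 := by simp only [dotProduct, pow_two]

lemma isHermitian_S (x : n → n → ℝ) : (∑ i, vecMulVec (x i) (x i)).IsHermitian := by
  unfold Matrix.IsHermitian
  ext i j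
  simp [conjTranspose_apply, Matrix.sum_apply, vecMulVec_apply, mul_comm]

lemma sum_mulVec' {ι : Type*} (s : Finset ι) (A : ι → Matrix n n ℝ) (v : n → ℝ) :
    (∑ i ∈ s, A i) *ᵥ v = ∑ i ∈ s, A i *ᵥ v := by
  ext j
  simp only [mulVec, dotProduct, Matrix.sum_apply, Finset.sum_apply, Finset.sum_mul]
  exact Finset.sum_comm

lemma dotProduct_sum' {ι : Type*} (s : Finset ι) (v : n → ℝ) (f : ι → (n → ℝ)) :
    v ⬝ᵥ (∑ i ∈ s, f i) = ∑ i ∈ s, v ⬝ᵥ f i := by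
  simp only [dotProduct, Finset.sum_apply, Finset.mul_sum]
  exact Finset.sum_comm

lemma det_bound [Nonempty n] (x : n → n → ℝ) (lam c : ℝ) (hc : 0 ≤ c)
    (hlam : lam = lambdaMin (∑ i, vecMulVec (x i) (x i)))
    (z : n → ℝ) (hz : ∀ i, c ≤ z i) :
    c * lam ≤ lambdaMin ((1 : Matrix n n ℝ) + ∑ i, z i • vecMulVec (x i) (x i)) := by
  set S : Matrix n n ℝ := ∑ i, vecMulVec (x i) (x i) with hS_def
  set V : Matrix n n ℝ := 1 + ∑ i, z i • vecMulVec (x i) (x i) with hV_def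
  have hS : S.IsHermitian := isHermitian_S x
  have hsumH : (∑ i, z i • vecMulVec (x i) (x i)).IsHermitian := by
    unfold Matrix.IsHermitian
    ext a b
    simp only [conjTranspose_apply, Matrix.sum_apply, Matrix.smul_apply, vecMulVec_apply,
      smul_eq_mul, star_trivial]
    exact Finset.sum_congr rfl fun i _ => by ring
  have hV : V.IsHermitian := Matrix.isHermitian_one.add hsumH
  rw [lambdaMin]
  apply le_csInf
  · obtain ⟨v, hv, hMv⟩ := exists_eigvec hV (Classical.arbitrary n)
    exact ⟨_, v, hv, hMv⟩
  rintro r ⟨v, hv, hMv⟩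
  have hvv : 0 < v ⬝ᵥ v := by
    rcases lt_or_eq_of_le (Finset.sum_nonneg fun i _ => mul_self_nonneg (v i) :
        (0:ℝ) ≤ v ⬝ᵥ v) with h | h
    · exact h
    · exact absurd (dotProduct_self_eq_zero.mp h.symm) hv
  have hquad : v ⬝ᵥ (V *ᵥ v) = v ⬝ᵥ v + ∑ i, z i * (x i ⬝ᵥ v) ^ 2 := by
    rw [hV_def, Matrix.add_mulVec, Matrix.one_mulVec, dotProduct_add]
    congr 1
    rw [sum_mulVec' _ _ _, dotProduct_sum']
    exact Finset.sum_congr rfl fun i _ => by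
      rw [Matrix.smul_mulVec, dotProduct_smul, quad_vecMulVec, smul_eq_mul]
  have hquadS : v ⬝ᵥ (S *ᵥ v) = ∑ i, (x i ⬝ᵥ v) ^ 2 := by
    rw [hS_def, sum_mulVec' _ _ _, dotProduct_sum']
    exact Finset.sum_congr rfl fun i _ => quad_vecMulVec _ _
  have hray := rayleigh hS v
  have hsum : c * ∑ i, (x i ⬝ᵥ v) ^ 2 ≤ ∑ i, z i * (x i ⬝ᵥ v) ^ 2 := by
    rw [Finset.mul_sum]
    exact Finset.sum_le_sum fun i _ =>
      mul_le_mul_of_nonneg_right (hz i) (sq_nonneg _)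
  have hr : r * (v ⬝ᵥ v) = v ⬝ᵥ (V *ᵥ v) := by
    rw [hMv, dotProduct_smul, smul_eq_mul]
  have key : c * lam * (v ⬝ᵥ v) ≤ r * (v ⬝ᵥ v) := by
    rw [hr, hquad]
    have h1 : c * (lam * (v ⬝ᵥ v)) ≤ c * (v ⬝ᵥ (S *ᵥ v)) := by
      apply mul_le_mul_of_nonneg_left _ hc
      rw [hlam]; exact hray
    rw [hquadS] at h1
    nlinarith [hvv]
  exact le_of_mul_le_mul_right key hvv

end LinAlg

/-- let `x_1, …, x_{d'} ∈ ℝ^{d'}` with `λ = λ_min(Σ_i x_i x_iᵀ) > 0`, let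
`Z_1, …, Z_{d'}` be independent with `Z_i ~ Binomial(k, w_i)`, `w_min = min_i w_i`, and
`ε_k = sqrt(q·log k/(2k))`. If `w_min ≥ ε_k`, then with probability at least `1 − d'/k^q`,
`λ_min(I + Σ_i Z_i·x_i x_iᵀ) ≥ k·(w_min − ε_k)·λ`. -/
theorem lambdaMin_covariance_lower_bound
    {Ω : Type*} [MeasurableSpace Ω] (μ : Measure Ω) [IsProbabilityMeasure μ]
    (d' : ℕ) (hd' : 0 < d') (k q : ℕ) (hk : 2 ≤ k) (hq : 1 ≤ q)
    (x : Fin d' → (Fin d' → ℝ)) (lam : ℝ)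
    (hlam : lam = lambdaMin (∑ i, Matrix.vecMulVec (x i) (x i)))
    (hlam_pos : 0 < lam)
    (w : Fin d' → ℝ) (hw : ∀ i, w i ∈ Set.Icc (0 : ℝ) 1)
    (wmin : ℝ) (hwmin : IsLeast (Set.range w) wmin)
    (hcond : Real.sqrt ((q : ℝ) * Real.log k / (2 * k)) ≤ wmin)
    (Z : Fin d' → Ω → ℕ) (hZmeas : ∀ i, Measurable (Z i))
    (hZindep : iIndepFun Z μ)
    (hZbinom : ∀ i, ∀ m : ℕ,
      μ {ω | Z i ω = m} =
        ENNReal.ofReal ((k.choose m : ℝ) * w i ^ m * (1 - w i) ^ (k - m))) :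
    1 - (d' : ℝ≥0∞) / (k : ℝ≥0∞) ^ q ≤
      μ {ω | (k : ℝ) * (wmin - Real.sqrt ((q : ℝ) * Real.log k / (2 * k))) * lam ≤
        lambdaMin ((1 : Matrix (Fin d') (Fin d') ℝ) +
          ∑ i, (Z i ω : ℝ) • Matrix.vecMulVec (x i) (x i))} := by
  haveI : Nonempty (Fin d') := ⟨⟨0, hd'⟩⟩
  set ε : ℝ := Real.sqrt ((q : ℝ) * Real.log k / (2 * k)) with hε_def
  have hk0 : (0 : ℝ) < k := by
    have h0 : (0:ℕ) < k := lt_of_lt_of_le two_pos hk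
    exact_mod_cast h0
  have hk1 : (1 : ℝ) ≤ k := by
    have h0 : (1:ℕ) ≤ k := le_trans one_le_two hk
    exact_mod_cast h0
  have hlogk : 0 ≤ Real.log k := Real.log_nonneg hk1
  have harg : 0 ≤ (q : ℝ) * Real.log k / (2 * k) := by positivity
  have hε0 : 0 ≤ ε := Real.sqrt_nonneg _
  have hε2 : ε ^ 2 = (q : ℝ) * Real.log k / (2 * k) := Real.sq_sqrt harg
  have hwle : ∀ i, wmin ≤ w i := fun i => hwmin.2 ⟨i, rfl⟩
  set N : Fin d' → ℕ := fun i => ⌈(k : ℝ) * (w i - ε)⌉₊ with hN_def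
  have hexp_eq : Real.exp (-(2 * (k : ℝ) * ε ^ 2)) = ((k : ℝ) ^ q)⁻¹ := by
    rw [hε2]
    have h1 : 2 * (k : ℝ) * ((q : ℝ) * Real.log k / (2 * k)) = (q : ℝ) * Real.log k := by
      field_simp
    rw [h1, Real.exp_neg, Real.exp_nat_mul, Real.exp_log hk0]
  have hbad : ∀ i, μ {ω | Z i ω < N i} ≤ ENNReal.ofReal (((k : ℝ) ^ q)⁻¹) := by
    intro i
    have hw1 := (hw i).1
    have hw2 := (hw i).2
    have hset : {ω | Z i ω < N i} = ⋃ m ∈ Finset.range (N i), {ω | Z i ω = m} := by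
      ext ω
      simp only [Set.mem_setOf_eq, Set.mem_iUnion, Finset.mem_range, exists_prop]
      exact ⟨fun h => ⟨Z i ω, h, rfl⟩, fun ⟨m, hm, h⟩ => by omega⟩
    rw [hset]
    calc μ (⋃ m ∈ Finset.range (N i), {ω | Z i ω = m})
        ≤ ∑ m ∈ Finset.range (N i), μ {ω | Z i ω = m} := measure_biUnion_finset_le _ _
      _ = ENNReal.ofReal (∑ m ∈ Finset.range (N i),
            (k.choose m : ℝ) * w i ^ m * (1 - w i) ^ (k - m)) := by
          rw [ENNReal.ofReal_sum_of_nonneg (fun m _ => by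
            have h3 : (0:ℝ) ≤ 1 - w i := by linarith
            exact mul_nonneg (mul_nonneg (Nat.cast_nonneg _) (pow_nonneg hw1 _))
              (pow_nonneg h3 _))]
          exact Finset.sum_congr rfl fun m _ => hZbinom i m
      _ ≤ ENNReal.ofReal (((k : ℝ) ^ q)⁻¹) := by
          apply ENNReal.ofReal_le_ofReal
          rw [← hexp_eq]
          exact binom_chernoff k (w i) ε hw1 hw2 hε0
  set bad : Set Ω := ⋃ i, {ω | Z i ω < N i} with hbad_def
  have hbadmeas : MeasurableSet bad := by
    apply MeasurableSet.iUnion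
    intro i
    have : {ω | Z i ω < N i} = Z i ⁻¹' {m | m < N i} := rfl
    rw [this]
    exact (hZmeas i) MeasurableSet.of_discrete
  have hbadle : μ bad ≤ (d' : ℝ≥0∞) / (k : ℝ≥0∞) ^ q := by
    calc μ bad ≤ ∑' i, μ {ω | Z i ω < N i} := measure_iUnion_le _
      _ = ∑ i, μ {ω | Z i ω < N i} := tsum_fintype _
      _ ≤ ∑ _i : Fin d', ENNReal.ofReal (((k : ℝ) ^ q)⁻¹) :=
          Finset.sum_le_sum fun i _ => hbad i
      _ = (d' : ℝ≥0∞) * ENNReal.ofReal (((k : ℝ) ^ q)⁻¹) := by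
          rw [Finset.sum_const, Finset.card_univ, Fintype.card_fin, nsmul_eq_mul]
      _ = (d' : ℝ≥0∞) / (k : ℝ≥0∞) ^ q := by
          rw [ENNReal.ofReal_inv_of_pos (by positivity), ENNReal.ofReal_pow (le_of_lt hk0),
            ENNReal.ofReal_natCast, div_eq_mul_inv]
  have hgood : 1 - (d' : ℝ≥0∞) / (k : ℝ≥0∞) ^ q ≤ μ badᶜ := by
    rw [prob_compl_eq_one_sub hbadmeas]
    exact tsub_le_tsub_left hbadle 1
  refine le_trans hgood (measure_mono ?_)
  intro ω hω
  simp only [hbad_def, Set.mem_compl_iff, Set.mem_iUnion, not_exists, Set.mem_setOf_eq] at hω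
  have hc : 0 ≤ (k : ℝ) * (wmin - ε) :=
    mul_nonneg (le_of_lt hk0) (by linarith [hcond])
  have hz : ∀ i, (k : ℝ) * (wmin - ε) ≤ (Z i ω : ℝ) := by
    intro i
    have h1 : N i ≤ Z i ω := not_lt.mp (hω i)
    have h2 : (k : ℝ) * (w i - ε) ≤ (N i : ℝ) := Nat.le_ceil _
    have h3 : (N i : ℝ) ≤ (Z i ω : ℝ) := by exact_mod_cast h1
    have h4 : (k : ℝ) * (wmin - ε) ≤ (k : ℝ) * (w i - ε) :=
      mul_le_mul_of_nonneg_left (by linarith [hwle i]) (le_of_lt hk0)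
    linarith
  exact det_bound x lam ((k : ℝ) * (wmin - ε)) hc hlam (fun i => (Z i ω : ℝ)) hz
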